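/- Define p_j(t) := 1 − (1/2)e^{−2εΩ_j t}, q_j(t) := (1/2)e^{−2εΩ_j t} for j = 1,2, and ρ̄(t) := diag(p₁(t)p₂(t), p₁(t)q₂(t), q₁(t)p₂(t), q₁(t)q₂(t)). Then ρ̄(0) = (1/4)I₄, and for every t ∈ ℝ the matrix-valued function ρ̄ is differentiable at t with ρ̄′(t) = −i[H₀, ρ̄(t)] + ε𝓛ᴰ_{(0,0)}(ρ̄(t)); i.e., ρ̄ is the exact solution of the two-qubit GKSL master equation with zero coherent and incoherent controls and initial state (1/4)I₄. Moreover, for every t ≥ 0, ρ̄(t) is Hermitian, positive semidefinite, and has trace 1. -/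

import Mathlib

open Matrix Kronecker Complex
open scoped ComplexOrder

noncomputable section

/-- 4×4 complex matrices, indexed by two-qubit (tensor-product) indices
in the order (0,0), (0,1), (1,0), (1,1). -/
abbrev M4 : Type := Matrix (Fin 2 × Fin 2) (Fin 2 × Fin 2) ℂ

/-- σ⁺ = [[0,0],[1,0]]. -/
def σp : Matrix (Fin 2) (Fin 2) ℂ := !![0, 0; 1, 0]
/-- σ⁻ = [[0,1],[0,0]]. -/
def σm : Matrix (Fin 2) (Fin 2) ℂ := !![0, 1; 0, 0]
/-- σ_z = diag(1,−1). -/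
def σz : Matrix (Fin 2) (Fin 2) ℂ := !![1, 0; 0, -1]

/-- σ₁⁺ = σ⁺ ⊗ I₂. -/
def s1p : M4 := σp ⊗ₖ (1 : Matrix (Fin 2) (Fin 2) ℂ)
/-- σ₁⁻ = σ⁻ ⊗ I₂. -/
def s1m : M4 := σm ⊗ₖ (1 : Matrix (Fin 2) (Fin 2) ℂ)
/-- σ₂⁺ = I₂ ⊗ σ⁺. -/
def s2p : M4 := (1 : Matrix (Fin 2) (Fin 2) ℂ) ⊗ₖ σp
/-- σ₂⁻ = I₂ ⊗ σ⁻. -/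
def s2m : M4 := (1 : Matrix (Fin 2) (Fin 2) ℂ) ⊗ₖ σm
/-- W₁ = σ_z ⊗ I₂. -/
def W1 : M4 := σz ⊗ₖ (1 : Matrix (Fin 2) (Fin 2) ℂ)
/-- W₂ = I₂ ⊗ σ_z. -/
def W2 : M4 := (1 : Matrix (Fin 2) (Fin 2) ℂ) ⊗ₖ σz

/-- diag(a,b,c,d) as a two-qubit 4×4 matrix. -/
def diag4 (a b c d : ℂ) : M4 :=
  Matrix.diagonal fun p => ![![a, b], ![c, d]] p.1 p.2

/-- Contribution of qubit j (with lowering/raising operators sm/sp) to the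
controlled GKSL dissipator: Ω[(n+1)(2σ⁻ρσ⁺ − {σ⁺σ⁻,ρ}) + n(2σ⁺ρσ⁻ − {σ⁻σ⁺,ρ})]. -/
def dissJ (sm sp : M4) (Ω nj : ℝ) (ρ : M4) : M4 :=
  (Ω : ℂ) • (((nj : ℂ) + 1) • (2 • (sm * ρ * sp) - (sp * sm * ρ + ρ * (sp * sm)))
    + (nj : ℂ) • (2 • (sp * ρ * sm) - (sm * sp * ρ + ρ * (sm * sp))))

/-- The controlled dissipator 𝓛ᴰ_n of the two-qubit master equation. -/
def diss (Ω1 Ω2 : ℝ) (n : ℝ × ℝ) (ρ : M4) : M4 :=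
  dissJ s1m s1p Ω1 n.1 ρ + dissJ s2m s2p Ω2 n.2 ρ

/-- Contribution of qubit j to the adjoint superoperator:
Ω[(n+1)(2σ⁺χσ⁻ − {σ⁺σ⁻,χ}) + n(2σ⁻χσ⁺ − {σ⁻σ⁺,χ})]. -/
def dissAdjJ (sm sp : M4) (Ω nj : ℝ) (χ : M4) : M4 :=
  (Ω : ℂ) • (((nj : ℂ) + 1) • (2 • (sp * χ * sm) - (sp * sm * χ + χ * (sp * sm)))
    + (nj : ℂ) • (2 • (sm * χ * sp) - (sm * sp * χ + χ * (sm * sp))))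

/-- The adjoint superoperator 𝓛ᴰ†_n. -/
def dissAdj (Ω1 Ω2 : ℝ) (n : ℝ × ℝ) (χ : M4) : M4 :=
  dissAdjJ s1m s1p Ω1 n.1 χ + dissAdjJ s2m s2p Ω2 n.2 χ

/-- Free Hamiltonian H₀ = (ω₁/2)W₁ + (ω₂/2)W₂. -/
def H0 (ω1 ω2 : ℝ) : M4 := ((ω1 / 2 : ℝ) : ℂ) • W1 + ((ω2 / 2 : ℝ) : ℂ) • W2

/-- Controlled Hamiltonian H_c = H₀ + ε(Λ₁n₁W₁ + Λ₂n₂W₂) + uV,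
for c = (u, n₁, n₂) : Fin 3 → ℝ. -/
def Hc (ω1 ω2 Λ1 Λ2 ε : ℝ) (V : M4) (c : Fin 3 → ℝ) : M4 :=
  H0 ω1 ω2 + (ε : ℂ) • (((Λ1 * c 1 : ℝ) : ℂ) • W1 + ((Λ2 * c 2 : ℝ) : ℂ) • W2)
    + ((c 0 : ℝ) : ℂ) • V

/-- Hilbert–Schmidt inner product ⟨A,B⟩ = Tr(A†B). -/
def hsInner (A B : M4) : ℂ := Matrix.trace (Aᴴ * B)

/-- Coherent switching function 𝒦ᵘ(χ,ρ) = ⟨χ, −i[V,ρ]⟩ (complex form). -/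
def KuC (V χ ρ : M4) : ℂ := hsInner χ ((-Complex.I) • (V * ρ - ρ * V))

/-- Incoherent switching function for qubit j:
𝒦ⁿʲ(χ,ρ) = ⟨χ, −i[Λ_j W_j, ρ] + εΩ_j(2σ_j⁻ρσ_j⁺ + 2σ_j⁺ρσ_j⁻ − 2ρ)⟩ (complex form). -/
def KnC (sm sp Wj : M4) (Λ ε Ω : ℝ) (χ ρ : M4) : ℂ :=
  hsInner χ ((-Complex.I) • ((Λ : ℂ) • (Wj * ρ - ρ * Wj))
    + ((ε * Ω : ℝ) : ℂ) • (2 • (sm * ρ * sp) + 2 • (sp * ρ * sm) - 2 • ρ))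

/-- The real switching-function vector 𝒦ᶜ(χ,ρ) = (𝒦ᵘ(χ,ρ), 𝒦ⁿ¹(χ,ρ), 𝒦ⁿ²(χ,ρ)) ∈ ℝ³
(for Hermitian χ, ρ the values of 𝒦ᵘ, 𝒦ⁿʲ are real, so the real parts are taken). -/
def Kc (Λ1 Λ2 ε Ω1 Ω2 : ℝ) (V χ ρ : M4) : Fin 3 → ℝ :=
  ![(KuC V χ ρ).re, (KnC s1m s1p W1 Λ1 ε Ω1 χ ρ).re, (KnC s2m s2p W2 Λ2 ε Ω2 χ ρ).re]

/-- Euclidean inner product on ℝ³. -/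
def inner3 (x y : Fin 3 → ℝ) : ℝ := x 0 * y 0 + x 1 * y 1 + x 2 * y 2

/-- Squared Euclidean norm on ℝ³. -/
def norm3sq (x : Fin 3 → ℝ) : ℝ := inner3 x x

/-- p_j(t) = 1 − (1/2)e^{−2εΩ_j t}. -/
def pbar (ε Ω t : ℝ) : ℝ := 1 - (1 / 2) * Real.exp (-2 * ε * Ω * t)
/-- q_j(t) = (1/2)e^{−2εΩ_j t}. -/
def qbar (ε Ω t : ℝ) : ℝ := (1 / 2) * Real.exp (-2 * ε * Ω * t)

/-- ρ̄(t) = diag(p₁p₂, p₁q₂, q₁p₂, q₁q₂): solution of the free GKSL evolution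
with ρ̄(0) = (1/4)I₄. -/
def rhoBar (ε Ω1 Ω2 : ℝ) (t : ℝ) : M4 :=
  diag4 ((pbar ε Ω1 t * pbar ε Ω2 t : ℝ) : ℂ) ((pbar ε Ω1 t * qbar ε Ω2 t : ℝ) : ℂ)
    ((qbar ε Ω1 t * pbar ε Ω2 t : ℝ) : ℂ) ((qbar ε Ω1 t * qbar ε Ω2 t : ℝ) : ℂ)

/-- g_j(t) = 1 − e^{2εΩ_j(t−T)}. -/
def gbar (ε Ω T t : ℝ) : ℝ := 1 - Real.exp (2 * ε * Ω * (t - T))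

/-- χ̄(t) = diag(1, g₂, g₁, g₁g₂): solution of the adjoint system with zero
controls and χ̄(T) = diag(1,0,0,0). -/
def chiBar (ε Ω1 Ω2 T : ℝ) (t : ℝ) : M4 :=
  diag4 1 ((gbar ε Ω2 T t : ℝ) : ℂ) ((gbar ε Ω1 T t : ℝ) : ℂ)
    ((gbar ε Ω1 T t * gbar ε Ω2 T t : ℝ) : ℂ)

attribute [local instance] Matrix.frobeniusNormedAddCommGroup Matrix.frobeniusNormedSpace



section helpers
variable (a b c d a' b' c' d' : ℂ)

lemma diag4_mul_diag4 : diag4 a b c d * diag4 a' b' c' d' = diag4 (a*a') (b*b') (c*c') (d*d') := by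
  ext ⟨i, j⟩ ⟨k, l⟩
  fin_cases i <;> fin_cases j <;> fin_cases k <;> fin_cases l <;>
    simp [diag4, Matrix.mul_apply, Fintype.sum_prod_type, Fin.sum_univ_two, Matrix.diagonal, Prod.ext_iff, Prod.fst_one, Prod.snd_one, Prod.fst_zero, Prod.snd_zero]

lemma s1m_diag_s1p : s1m * diag4 a b c d * s1p = diag4 c d 0 0 := by
  ext ⟨i, j⟩ ⟨k, l⟩
  fin_cases i <;> fin_cases j <;> fin_cases k <;> fin_cases l <;>
    simp [diag4, s1m, s1p, σm, σp, Matrix.mul_apply, Fintype.sum_prod_type,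
      Fin.sum_univ_two, Matrix.diagonal, Matrix.one_apply, Prod.ext_iff, Prod.fst_one, Prod.snd_one, Prod.fst_zero, Prod.snd_zero]

lemma s1p_s1m_eq : s1p * s1m = diag4 0 0 1 1 := by
  ext ⟨i, j⟩ ⟨k, l⟩
  fin_cases i <;> fin_cases j <;> fin_cases k <;> fin_cases l <;>
    simp [diag4, s1m, s1p, σm, σp, Matrix.mul_apply, Fintype.sum_prod_type,
      Fin.sum_univ_two, Matrix.diagonal, Matrix.one_apply, Prod.ext_iff, Prod.fst_one, Prod.snd_one, Prod.fst_zero, Prod.snd_zero]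

lemma s2m_diag_s2p : s2m * diag4 a b c d * s2p = diag4 b 0 d 0 := by
  ext ⟨i, j⟩ ⟨k, l⟩
  fin_cases i <;> fin_cases j <;> fin_cases k <;> fin_cases l <;>
    simp [diag4, s2m, s2p, σm, σp, Matrix.mul_apply, Fintype.sum_prod_type,
      Fin.sum_univ_two, Matrix.diagonal, Matrix.one_apply, Prod.ext_iff, Prod.fst_one, Prod.snd_one, Prod.fst_zero, Prod.snd_zero]

lemma s2p_s2m_eq : s2p * s2m = diag4 0 1 0 1 := by
  ext ⟨i, j⟩ ⟨k, l⟩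
  fin_cases i <;> fin_cases j <;> fin_cases k <;> fin_cases l <;>
    simp [diag4, s2m, s2p, σm, σp, Matrix.mul_apply, Fintype.sum_prod_type,
      Fin.sum_univ_two, Matrix.diagonal, Matrix.one_apply, Prod.ext_iff, Prod.fst_one, Prod.snd_one, Prod.fst_zero, Prod.snd_zero]

lemma s1m_diag_s1p' : s1p * diag4 a b c d * s1m = diag4 0 0 a b := by
  ext ⟨i, j⟩ ⟨k, l⟩
  fin_cases i <;> fin_cases j <;> fin_cases k <;> fin_cases l <;>
    simp [diag4, s1m, s1p, σm, σp, Matrix.mul_apply, Fintype.sum_prod_type,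
      Fin.sum_univ_two, Matrix.diagonal, Matrix.one_apply, Prod.ext_iff, Prod.fst_one, Prod.snd_one, Prod.fst_zero, Prod.snd_zero]

lemma H0_eq (ω1 ω2 : ℝ) : H0 ω1 ω2 = diag4 ((ω1/2 : ℝ) + (ω2/2 : ℝ)) ((ω1/2 : ℝ) - (ω2/2 : ℝ))
    (-(ω1/2 : ℝ) + (ω2/2 : ℝ)) (-(ω1/2 : ℝ) - (ω2/2 : ℝ)) := by
  ext ⟨i, j⟩ ⟨k, l⟩
  fin_cases i <;> fin_cases j <;> fin_cases k <;> fin_cases l <;>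
    simp [H0, W1, W2, σz, diag4, Matrix.diagonal, Matrix.one_apply, Prod.ext_iff] <;> push_cast <;> ring

lemma smul_diag4 (z : ℂ) : z • diag4 a b c d = diag4 (z*a) (z*b) (z*c) (z*d) := by
  ext ⟨i, j⟩ ⟨k, l⟩
  fin_cases i <;> fin_cases j <;> fin_cases k <;> fin_cases l <;> simp [diag4, Matrix.diagonal, Prod.ext_iff, Prod.fst_one, Prod.snd_one, Prod.fst_zero, Prod.snd_zero] <;> split_ifs <;> simp

lemma nsmul_diag4 (n : ℕ) : n • diag4 a b c d = diag4 (n*a) (n*b) (n*c) (n*d) := by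
  ext ⟨i, j⟩ ⟨k, l⟩
  fin_cases i <;> fin_cases j <;> fin_cases k <;> fin_cases l <;> simp [diag4, Matrix.diagonal, Prod.ext_iff, Prod.fst_one, Prod.snd_one, Prod.fst_zero, Prod.snd_zero] <;> split_ifs <;> simp

lemma add_diag4 : diag4 a b c d + diag4 a' b' c' d' = diag4 (a+a') (b+b') (c+c') (d+d') := by
  ext ⟨i, j⟩ ⟨k, l⟩
  fin_cases i <;> fin_cases j <;> fin_cases k <;> fin_cases l <;> simp [diag4, Matrix.diagonal, Prod.ext_iff, Prod.fst_one, Prod.snd_one, Prod.fst_zero, Prod.snd_zero] <;> split_ifs <;> simp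

lemma sub_diag4 : diag4 a b c d - diag4 a' b' c' d' = diag4 (a-a') (b-b') (c-c') (d-d') := by
  ext ⟨i, j⟩ ⟨k, l⟩
  fin_cases i <;> fin_cases j <;> fin_cases k <;> fin_cases l <;> simp [diag4, Matrix.diagonal, Prod.ext_iff, Prod.fst_one, Prod.snd_one, Prod.fst_zero, Prod.snd_zero] <;> split_ifs <;> simp

lemma diag4_congr (h1 : a = a') (h2 : b = b') (h3 : c = c') (h4 : d = d') :
    diag4 a b c d = diag4 a' b' c' d' := by rw [h1, h2, h3, h4]

end helpers

lemma rhs_eq (ω1 ω2 Ω1 Ω2 ε : ℝ) (a b c d : ℂ) :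
    (-Complex.I) • (H0 ω1 ω2 * diag4 a b c d - diag4 a b c d * H0 ω1 ω2)
      + (ε : ℂ) • diss Ω1 Ω2 (0, 0) (diag4 a b c d)
    = diag4 ((ε : ℂ) * (2 * Ω1 * c + 2 * Ω2 * b)) ((ε : ℂ) * (2 * Ω1 * d - 2 * Ω2 * b))
        ((ε : ℂ) * (-(2 * Ω1 * c) + 2 * Ω2 * d)) ((ε : ℂ) * (-(2 * Ω1 * d) - 2 * Ω2 * d)) := by
  rw [diss, dissJ, dissJ, H0_eq]
  simp only [s1p_s1m_eq, s2p_s2m_eq, s1m_diag_s1p, s2m_diag_s2p, diag4_mul_diag4,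
    Complex.ofReal_zero, zero_smul, add_zero, nsmul_diag4, smul_diag4, add_diag4,
    sub_diag4, zero_add]
  apply diag4_congr <;> push_cast <;> ring

lemma diag4_decomp (a b c d : ℂ) : diag4 a b c d =
    a • diag4 1 0 0 0 + b • diag4 0 1 0 0 + c • diag4 0 0 1 0 + d • diag4 0 0 0 1 := by
  simp only [smul_diag4, add_diag4]
  apply diag4_congr <;> ring

lemma hasDerivAt_diag4 {f1 f2 f3 f4 : ℝ → ℂ} {f1' f2' f3' f4' : ℂ} {t : ℝ}
    (h1 : HasDerivAt f1 f1' t) (h2 : HasDerivAt f2 f2' t)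
    (h3 : HasDerivAt f3 f3' t) (h4 : HasDerivAt f4 f4' t) :
    HasDerivAt (fun s => diag4 (f1 s) (f2 s) (f3 s) (f4 s)) (diag4 f1' f2' f3' f4') t := by
  have H := (((h1.smul_const (diag4 1 0 0 0 : M4)).add (h2.smul_const (diag4 0 1 0 0 : M4))).add
    (h3.smul_const (diag4 0 0 1 0 : M4))).add (h4.smul_const (diag4 0 0 0 1 : M4))
  simp only [Pi.add_def, ← diag4_decomp] at H
  exact H

lemma hasDerivAt_qbar (ε Ω t : ℝ) :
    HasDerivAt (qbar ε Ω) (-(2 * ε * Ω) * qbar ε Ω t) t := by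
  unfold qbar
  have h : HasDerivAt (fun s : ℝ => -2 * ε * Ω * s) (-2 * ε * Ω) t := by
    simpa using (hasDerivAt_id t).const_mul (-2 * ε * Ω)
  have := (h.exp).const_mul (1 / 2 : ℝ)
  exact this.congr_deriv (by ring)

lemma hasDerivAt_pbar (ε Ω t : ℝ) :
    HasDerivAt (pbar ε Ω) (2 * ε * Ω * qbar ε Ω t) t := by
  unfold pbar
  have hq := hasDerivAt_qbar ε Ω t
  have := (hasDerivAt_const t (1 : ℝ)).sub hq
  exact this.congr_deriv (by ring)

lemma pbar_add_qbar (ε Ω t : ℝ) : pbar ε Ω t + qbar ε Ω t = 1 := by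
  simp [pbar, qbar]

lemma qbar_nonneg (ε Ω t : ℝ) : 0 ≤ qbar ε Ω t := by
  unfold qbar; positivity

lemma pbar_nonneg {ε Ω : ℝ} (hε : 0 < ε) (hΩ : 0 < Ω) {t : ℝ} (ht : 0 ≤ t) :
    0 ≤ pbar ε Ω t := by
  unfold pbar
  have h : Real.exp (-2 * ε * Ω * t) ≤ 1 := by
    rw [Real.exp_le_one_iff]
    nlinarith [mul_nonneg (mul_nonneg hε.le hΩ.le) ht]
  linarith

theorem rhoBar_solves_free_gksl'
    (ω1 ω2 Ω1 Ω2 ε : ℝ)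
    (hω1 : 0 < ω1) (hω2 : 0 < ω2) (hΩ1 : 0 < Ω1) (hΩ2 : 0 < Ω2) (hε : 0 < ε) :
    rhoBar ε Ω1 Ω2 0 = ((1 / 4 : ℝ) : ℂ) • (1 : M4)
      ∧ (∀ t : ℝ, HasDerivAt (rhoBar ε Ω1 Ω2)
          ((-Complex.I) • (H0 ω1 ω2 * rhoBar ε Ω1 Ω2 t - rhoBar ε Ω1 Ω2 t * H0 ω1 ω2)
            + (ε : ℂ) • diss Ω1 Ω2 (0, 0) (rhoBar ε Ω1 Ω2 t)) t)
      ∧ (∀ t : ℝ, 0 ≤ t →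
          (rhoBar ε Ω1 Ω2 t).IsHermitian ∧ (rhoBar ε Ω1 Ω2 t).PosSemidef
            ∧ Matrix.trace (rhoBar ε Ω1 Ω2 t) = 1) := by
  refine ⟨?_, ?_, ?_⟩
  · ext ⟨i, j⟩ ⟨k, l⟩
    fin_cases i <;> fin_cases j <;> fin_cases k <;> fin_cases l <;>
      simp [rhoBar, diag4, pbar, qbar, Matrix.diagonal, Matrix.one_apply, Prod.ext_iff,
        Prod.fst_one, Prod.snd_one, Prod.fst_zero, Prod.snd_zero] <;> norm_num
  · intro t
    have h1 := (((hasDerivAt_pbar ε Ω1 t).mul (hasDerivAt_pbar ε Ω2 t))).ofReal_comp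
    have h2 := (((hasDerivAt_pbar ε Ω1 t).mul (hasDerivAt_qbar ε Ω2 t))).ofReal_comp
    have h3 := (((hasDerivAt_qbar ε Ω1 t).mul (hasDerivAt_pbar ε Ω2 t))).ofReal_comp
    have h4 := (((hasDerivAt_qbar ε Ω1 t).mul (hasDerivAt_qbar ε Ω2 t))).ofReal_comp
    have H := hasDerivAt_diag4 h1 h2 h3 h4
    have hval : ((-Complex.I) • (H0 ω1 ω2 * rhoBar ε Ω1 Ω2 t - rhoBar ε Ω1 Ω2 t * H0 ω1 ω2)
        + (ε : ℂ) • diss Ω1 Ω2 (0, 0) (rhoBar ε Ω1 Ω2 t))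
        = diag4 ((2 * ε * Ω1 * qbar ε Ω1 t * pbar ε Ω2 t
              + pbar ε Ω1 t * (2 * ε * Ω2 * qbar ε Ω2 t) : ℝ) : ℂ)
          ((2 * ε * Ω1 * qbar ε Ω1 t * qbar ε Ω2 t
              + pbar ε Ω1 t * (-(2 * ε * Ω2) * qbar ε Ω2 t) : ℝ) : ℂ)
          ((-(2 * ε * Ω1) * qbar ε Ω1 t * pbar ε Ω2 t
              + qbar ε Ω1 t * (2 * ε * Ω2 * qbar ε Ω2 t) : ℝ) : ℂ)
          ((-(2 * ε * Ω1) * qbar ε Ω1 t * qbar ε Ω2 t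
              + qbar ε Ω1 t * (-(2 * ε * Ω2) * qbar ε Ω2 t) : ℝ) : ℂ) := by
      rw [show rhoBar ε Ω1 Ω2 t = diag4 ((pbar ε Ω1 t * pbar ε Ω2 t : ℝ) : ℂ)
          ((pbar ε Ω1 t * qbar ε Ω2 t : ℝ) : ℂ) ((qbar ε Ω1 t * pbar ε Ω2 t : ℝ) : ℂ)
          ((qbar ε Ω1 t * qbar ε Ω2 t : ℝ) : ℂ) from rfl, rhs_eq]
      apply diag4_congr <;> push_cast <;> ring
    rw [hval]
    exact H
  · intro t ht
    have hp1 := pbar_nonneg hε hΩ1 ht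
    have hp2 := pbar_nonneg hε hΩ2 ht
    have hq1 := qbar_nonneg ε Ω1 t
    have hq2 := qbar_nonneg ε Ω2 t
    refine ⟨?_, ?_, ?_⟩
    · rw [show rhoBar ε Ω1 Ω2 t = Matrix.diagonal _ from rfl, Matrix.isHermitian_diagonal_iff]
      rintro ⟨i, j⟩
      fin_cases i <;> fin_cases j <;>
        simp [isSelfAdjoint_iff, Complex.star_def, ← Complex.ofReal_mul, Complex.conj_ofReal]
    · rw [show rhoBar ε Ω1 Ω2 t = Matrix.diagonal _ from rfl, Matrix.posSemidef_diagonal_iff]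
      rintro ⟨i, j⟩
      fin_cases i <;> fin_cases j <;> simp <;>
        exact_mod_cast Complex.zero_le_real.2 (by positivity)
    · rw [show rhoBar ε Ω1 Ω2 t = Matrix.diagonal _ from rfl, Matrix.trace_diagonal]
      rw [Fintype.sum_prod_type]
      simp only [Fin.sum_univ_two]
      have h1 := pbar_add_qbar ε Ω1 t
      have h2 := pbar_add_qbar ε Ω2 t
      have : pbar ε Ω1 t * pbar ε Ω2 t + pbar ε Ω1 t * qbar ε Ω2 t
          + (qbar ε Ω1 t * pbar ε Ω2 t + qbar ε Ω1 t * qbar ε Ω2 t) = 1 := by nlinarith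
      simp only [Matrix.cons_val', Matrix.cons_val_zero, Matrix.cons_val_one, Matrix.head_cons]
      exact_mod_cast this

/-- ρ̄(t) = diag(p₁p₂, p₁q₂, q₁p₂, q₁q₂) satisfies ρ̄(0) = (1/4)I₄,
solves the free two-qubit GKSL master equation
ρ̄′(t) = −i[H₀, ρ̄(t)] + ε𝓛ᴰ_{(0,0)}(ρ̄(t)) for all t ∈ ℝ, and for t ≥ 0 is a
density matrix (Hermitian, positive semidefinite, trace 1). -/
theorem rhoBar_solves_free_gksl
    (ω1 ω2 Ω1 Ω2 ε : ℝ)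
    (hω1 : 0 < ω1) (hω2 : 0 < ω2) (hΩ1 : 0 < Ω1) (hΩ2 : 0 < Ω2) (hε : 0 < ε) :
    rhoBar ε Ω1 Ω2 0 = ((1 / 4 : ℝ) : ℂ) • (1 : M4)
      ∧ (∀ t : ℝ, HasDerivAt (rhoBar ε Ω1 Ω2)
          ((-Complex.I) • (H0 ω1 ω2 * rhoBar ε Ω1 Ω2 t - rhoBar ε Ω1 Ω2 t * H0 ω1 ω2)
            + (ε : ℂ) • diss Ω1 Ω2 (0, 0) (rhoBar ε Ω1 Ω2 t)) t)
      ∧ (∀ t : ℝ, 0 ≤ t →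
          (rhoBar ε Ω1 Ω2 t).IsHermitian ∧ (rhoBar ε Ω1 Ω2 t).PosSemidef
            ∧ Matrix.trace (rhoBar ε Ω1 Ω2 t) = 1) := by
  exact rhoBar_solves_free_gksl' ω1 ω2 Ω1 Ω2 ε hω1 hω2 hΩ1 hΩ2 hε

end
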